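/- arXiv:1201.3229 — 4 statements merged into one kernel-verified Lean document; each statement's English description precedes it below -/
import Mathlib

section
/- Let p be a prime, G a finite group, H a subgroup of G, and x an element of H of p-power order. Assume (a) C_G(x) ≤ H and (b) x^G ∩ H ⊆ x^H (every G-conjugate of x lying in H is already an H-conjugate of x). Then for every subgroup K of G with x ∈ K ≤ H, we have N_G(K) ≤ H. -/
/-- **Lemma 2.1(i).** Let `p` be a prime, `G` a finite group, `H ≤ G`, and `x ∈ H` an element
of `p`-power order. If `C_G(x) ≤ H` and every `G`-conjugate of `x` lying in `H` is already an
`H`-conjugate of `x`, then for every subgroup `K` with `x ∈ K ≤ H` we have `N_G(K) ≤ H`. -/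
theorem stmt_0 {G : Type*} [Group G] [Finite G] (p : ℕ) (hp : p.Prime)
    (H : Subgroup G) (x : G) (hxH : x ∈ H) (hord : ∃ n : ℕ, orderOf x = p ^ n)
    (ha : Subgroup.centralizer {x} ≤ H)
    (hb : ∀ g : G, g⁻¹ * x * g ∈ H → ∃ h ∈ H, g⁻¹ * x * g = h⁻¹ * x * h) :
    ∀ K : Subgroup G, x ∈ K → K ≤ H → Subgroup.normalizer (K : Set G) ≤ H := by
  intro K hxK hKH g hg
  rw [Subgroup.mem_normalizer_iff''] at hg
  have hxg : g⁻¹ * x * g ∈ K := by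
    have := (hg x).mp hxK
    simpa [mul_assoc] using this
  obtain ⟨h, hh, heq⟩ := hb g (hKH hxg)
  have hc : g * h⁻¹ ∈ Subgroup.centralizer {x} := by
    rw [Subgroup.mem_centralizer_iff]
    intro y hy
    rcases hy with rfl
    calc y * (g * h⁻¹) = g * (g⁻¹ * y * g) * h⁻¹ := by group
      _ = g * (h⁻¹ * y * h) * h⁻¹ := by rw [heq]
      _ = (g * h⁻¹) * y := by group
  have : (g * h⁻¹) * h ∈ H := H.mul_mem (ha hc) hh
  simpa using this
end

section
/- With the tensor-product setup over GF(3): the fixed space C_V(d₁) equals the commutator space [V,d₁], equals the span of {e⊗x⊗y : x, y ∈ {e,f}}, has dimension 4, and is totally isotropic with respect to the form B. -/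
set_option maxHeartbeats 1000000
set_option synthInstance.maxHeartbeats 400000


noncomputable section

open TensorProduct

/-- The field `GF(3)`. -/
abbrev F3 := ZMod 3
/-- The 2-dimensional symplectic space `W` over `GF(3)`. -/
abbrev W := Fin 2 → F3
/-- `V = W ⊗ W ⊗ W`. -/
abbrev V := W ⊗[F3] (W ⊗[F3] W)

noncomputable instance : AddCommGroup V := inferInstance

/-- The basis vector `e` of `W`. -/
def e : W := ![1, 0]
/-- The basis vector `f` of `W`. -/
def f : W := ![0, 1]

/-- The linear automorphism `d` of `W` with `d e = e`, `d f = e + f`. -/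
def d : W →ₗ[F3] W := Matrix.toLin' !![1, 1; 0, 1]
/-- The inverse of `d`: `d⁻¹ e = e`, `d⁻¹ f = f - e`. -/
def dinv : W →ₗ[F3] W := Matrix.toLin' !![1, -1; 0, 1]

/-- `d₁ = d ⊗ 1 ⊗ 1`. -/
def d₁ : V →ₗ[F3] V := TensorProduct.map d LinearMap.id
/-- `d₂ = d ⊗ d⁻¹ ⊗ 1`. -/
def d₂ : V →ₗ[F3] V := TensorProduct.map d (TensorProduct.map dinv LinearMap.id)
/-- `d₃ = d ⊗ d ⊗ d`. -/
def d₃ : V →ₗ[F3] V := TensorProduct.map d (TensorProduct.map d d)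

/-- The alternating form `⟨·,·⟩` on `W` with `⟨e,f⟩ = 1 = -⟨f,e⟩`. -/
def ω : LinearMap.BilinForm F3 W := Matrix.toLinearMap₂' F3 !![0, 1; -1, 0]

/-- The form `B` on `V` with `B(v₁⊗v₂⊗v₃, w₁⊗w₂⊗w₃) = ⟨v₁,w₁⟩⟨v₂,w₂⟩⟨v₃,w₃⟩`. -/
def B : LinearMap.BilinForm F3 V :=
  LinearMap.BilinForm.tmul ω (LinearMap.BilinForm.tmul ω ω)

/-- The fixed space `C_V(g) = ker (g - 1)`. -/
def CV (g : V →ₗ[F3] V) : Submodule F3 V := LinearMap.ker ((g - (LinearMap.id : V →ₗ[F3] V)))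
/-- The commutator space `[V,g] = im (g - 1)`. -/
def comm1 (g : V →ₗ[F3] V) : Submodule F3 V := LinearMap.range ((g - (LinearMap.id : V →ₗ[F3] V)))
/-- The iterated commutator space `[V,g,g] = im ((g - 1)²)`. -/
def comm2 (g : V →ₗ[F3] V) : Submodule F3 V :=
  LinearMap.range (((g - (LinearMap.id : V →ₗ[F3] V)) ∘ₗ (g - (LinearMap.id : V →ₗ[F3] V))))
/-- A subspace `U` is totally isotropic if `B` vanishes identically on `U × U`. -/
def TotallyIsotropic (U : Submodule F3 V) : Prop := ∀ u ∈ U, ∀ v ∈ U, B u v = 0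

/-! ### Auxiliary material -/

/-- Coordinate projections of `V` to `W ⊗ W`. -/
def p (i : Fin 2) : V →ₗ[F3] (W ⊗[F3] W) :=
  (TensorProduct.lid F3 (W ⊗[F3] W)).toLinearMap ∘ₗ
    TensorProduct.map (LinearMap.proj i) LinearMap.id

@[simp] lemma p_tmul (i : Fin 2) (w : W) (t : W ⊗[F3] W) :
    p i (w ⊗ₜ[F3] t) = w i • t := by
  simp [p]

lemma w_decomp (w : W) : w = w 0 • e + w 1 • f := by
  funext i; fin_cases i <;> simp [e, f]

lemma d_apply (w : W) : d w = w + w 1 • e := by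
  funext i
  fin_cases i <;>
    simp [d, e, Matrix.toLin'_apply, Matrix.mulVec, dotProduct,
      Fin.sum_univ_succ, mul_comm]

lemma v_decomp (v : V) : v = e ⊗ₜ[F3] (p 0 v) + f ⊗ₜ[F3] (p 1 v) := by
  induction v using TensorProduct.induction_on with
  | zero => rw [map_zero, map_zero, tmul_zero, tmul_zero, add_zero]
  | tmul w t =>
      rw [p_tmul, p_tmul, tmul_smul, tmul_smul, smul_tmul', smul_tmul',
        ← add_tmul, ← w_decomp]
  | add x y hx hy =>
      rw [map_add, map_add, tmul_add, tmul_add]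
      nth_rewrite 1 [hx, hy]
      abel

lemma d₁_sub_one (v : V) :
    (d₁ - (LinearMap.id : V →ₗ[F3] V)) v = e ⊗ₜ[F3] (p 1 v) := by
  induction v using TensorProduct.induction_on with
  | zero => rw [map_zero, map_zero, tmul_zero]
  | tmul w t =>
      rw [LinearMap.sub_apply, LinearMap.id_apply]
      show d w ⊗ₜ[F3] (LinearMap.id t) - w ⊗ₜ[F3] t = _
      rw [LinearMap.id_apply, d_apply, add_tmul, smul_tmul, p_tmul]
      abel
  | add x y hx hy =>
      rw [map_add, map_add, hx, hy, tmul_add]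

/-- The span of the four generators. -/
def S : Submodule F3 V :=
  Submodule.span F3
    {e ⊗ₜ[F3] (e ⊗ₜ[F3] e), e ⊗ₜ[F3] (e ⊗ₜ[F3] f),
     e ⊗ₜ[F3] (f ⊗ₜ[F3] e), e ⊗ₜ[F3] (f ⊗ₜ[F3] f)}

lemma e_eq : e = Pi.basisFun F3 (Fin 2) 0 := by
  funext i; fin_cases i <;> simp [e]

lemma f_eq : f = Pi.basisFun F3 (Fin 2) 1 := by
  funext i; fin_cases i <;> simp [f]

lemma single0 : (Pi.single 0 1 : W) = e := by
  funext i; fin_cases i <;> simp [e]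

lemma single1 : (Pi.single 1 1 : W) = f := by
  funext i; fin_cases i <;> simp [f]

lemma span_WW : Submodule.span F3
    ({e ⊗ₜ[F3] e, e ⊗ₜ[F3] f, f ⊗ₜ[F3] e, f ⊗ₜ[F3] f} : Set (W ⊗[F3] W)) = ⊤ := by
  let b2 := (Pi.basisFun F3 (Fin 2)).tensorProduct (Pi.basisFun F3 (Fin 2))
  have hset : ({e ⊗ₜ[F3] e, e ⊗ₜ[F3] f, f ⊗ₜ[F3] e, f ⊗ₜ[F3] f} : Set (W ⊗[F3] W))
      = Set.range b2 := by
    ext x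
    constructor
    · rintro (h | h | h | h) <;> subst h
      · exact ⟨(0, 0), by simp [b2, Module.Basis.tensorProduct_apply, ← Prod.mk_zero_zero, ← Prod.mk_one_one,
            ← e_eq, ← f_eq, single0, single1]⟩
      · exact ⟨(0, 1), by simp [b2, Module.Basis.tensorProduct_apply, ← Prod.mk_zero_zero, ← Prod.mk_one_one,
            ← e_eq, ← f_eq, single0, single1]⟩
      · exact ⟨(1, 0), by simp [b2, Module.Basis.tensorProduct_apply, ← Prod.mk_zero_zero, ← Prod.mk_one_one,
            ← e_eq, ← f_eq, single0, single1]⟩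
      · exact ⟨(1, 1), by simp [b2, Module.Basis.tensorProduct_apply, ← Prod.mk_zero_zero, ← Prod.mk_one_one,
            ← e_eq, ← f_eq, single0, single1]⟩
    · rintro ⟨⟨i, j⟩, rfl⟩
      fin_cases i <;> fin_cases j <;>
        simp [b2, Module.Basis.tensorProduct_apply, ← Prod.mk_zero_zero, ← Prod.mk_one_one,
            ← e_eq, ← f_eq, single0, single1]
  rw [hset, b2.span_eq]

lemma e_tmul_mem (t : W ⊗[F3] W) : e ⊗ₜ[F3] t ∈ S := by
  have ht : t ∈ Submodule.span F3
      ({e ⊗ₜ[F3] e, e ⊗ₜ[F3] f, f ⊗ₜ[F3] e, f ⊗ₜ[F3] f} : Set (W ⊗[F3] W)) := by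
    rw [span_WW]; trivial
  induction ht using Submodule.span_induction with
  | mem x hx =>
      rcases hx with h | h | h | h <;> subst h <;>
        exact Submodule.subset_span (by simp [S])
  | zero => rw [tmul_zero]; exact Submodule.zero_mem _
  | add x y _ _ hx hy => rw [tmul_add]; exact Submodule.add_mem _ hx hy
  | smul c x _ hx => rw [tmul_smul]; exact Submodule.smul_mem _ c hx

lemma CV_eq_S : CV d₁ = S := by
  apply le_antisymm
  · intro v hv
    have h : e ⊗ₜ[F3] (p 1 v) = 0 := by
      rw [← d₁_sub_one]
      exact hv
    have hp1 : p 1 v = 0 := by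
      have h0 := congrArg (p 0) h
      simpa [e] using h0
    rw [v_decomp v, hp1, tmul_zero, add_zero]
    exact e_tmul_mem _
  · rw [S, Submodule.span_le]
    rintro x (h | h | h | h) <;> subst h <;>
      · refine LinearMap.mem_ker.mpr ?_
        rw [d₁_sub_one]
        simp [e]

lemma comm1_eq_S : comm1 d₁ = S := by
  apply le_antisymm
  · rintro _ ⟨v, rfl⟩
    rw [d₁_sub_one]
    exact e_tmul_mem _
  · rw [S, Submodule.span_le]
    have key : ∀ t : W ⊗[F3] W, e ⊗ₜ[F3] t ∈ comm1 d₁ := fun t =>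
      ⟨f ⊗ₜ[F3] t, by rw [d₁_sub_one]; simp [f]⟩
    rintro x (h | h | h | h) <;> subst h <;> exact key _


def bV : Module.Basis (Fin 2 × Fin 2 × Fin 2) F3 V :=
  (Pi.basisFun F3 (Fin 2)).tensorProduct
    ((Pi.basisFun F3 (Fin 2)).tensorProduct (Pi.basisFun F3 (Fin 2)))

lemma hgiV : LinearIndependent F3 (fun i => bV i) := bV.linearIndependent

lemma hgi2 : LinearIndependent F3 (bV ∘ (fun ij : Fin 2 × Fin 2 => ((0 : Fin 2), ij.1, ij.2))) :=
  bV.linearIndependent.comp _ (fun a b h => by simpa [Prod.ext_iff] using h)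


lemma bV_apply (i j k : Fin 2) :
    bV (i, j, k) = (Pi.basisFun F3 (Fin 2) i) ⊗ₜ[F3]
      ((Pi.basisFun F3 (Fin 2) j) ⊗ₜ[F3] (Pi.basisFun F3 (Fin 2) k)) := by
  rw [bV, Module.Basis.tensorProduct_apply, Module.Basis.tensorProduct_apply]

def u : Fin 2 → W := ![e, f]

lemma hu (i : Fin 2) : Pi.basisFun F3 (Fin 2) i = u i := by
  fin_cases i
  · simpa [u] using e_eq.symm
  · simpa [u] using f_eq.symm

lemma key (i j : Fin 2) :
    bV ((0 : Fin 2), i, j) = e ⊗ₜ[F3] ((u i) ⊗ₜ[F3] (u j)) := by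
  rw [bV_apply, hu, hu, hu]
  simp [u]

lemma hrange : Set.range (bV ∘ (fun ij : Fin 2 × Fin 2 => ((0 : Fin 2), ij.1, ij.2))) =
    {e ⊗ₜ[F3] (e ⊗ₜ[F3] e), e ⊗ₜ[F3] (e ⊗ₜ[F3] f),
     e ⊗ₜ[F3] (f ⊗ₜ[F3] e), e ⊗ₜ[F3] (f ⊗ₜ[F3] f)} := by
  ext x
  constructor
  · rintro ⟨⟨i, j⟩, rfl⟩
    rw [Function.comp_apply, key i j]
    fin_cases i <;> fin_cases j <;> simp [u]
  · rintro (h | h | h | h) <;> subst h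
    · exact ⟨(0, 0), by rw [Function.comp_apply, key]; simp [u]⟩
    · exact ⟨(0, 1), by rw [Function.comp_apply, key]; simp [u]⟩
    · exact ⟨(1, 0), by rw [Function.comp_apply, key]; simp [u]⟩
    · exact ⟨(1, 1), by rw [Function.comp_apply, key]; simp [u]⟩

lemma finrank_S : Module.finrank F3 S = 4 := by
  have hS : S = Submodule.span F3
      (Set.range (bV ∘ (fun ij : Fin 2 × Fin 2 => ((0 : Fin 2), ij.1, ij.2)))) := by
    rw [hrange]; rfl
  rw [hS, finrank_span_eq_card hgi2]
  simp

lemma omega_ee : ω e e = 0 := by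
  simp [ω, e, Matrix.toLinearMap₂'_apply, Fin.sum_univ_succ]

lemma isotropic_S : TotallyIsotropic S := by
  have key : ∀ s t : W ⊗[F3] W, B (e ⊗ₜ[F3] s) (e ⊗ₜ[F3] t) = 0 := by
    intro s t
    simp [B, omega_ee]
  intro u hu v hv
  induction hu using Submodule.span_induction with
  | mem x hx =>
      obtain ⟨s, rfl⟩ : ∃ s, x = e ⊗ₜ[F3] s := by
        rcases hx with h | h | h | h <;> exact ⟨_, h⟩
      induction hv using Submodule.span_induction with
      | mem y hy =>
          obtain ⟨t, rfl⟩ : ∃ t, y = e ⊗ₜ[F3] t := by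
            rcases hy with h | h | h | h <;> exact ⟨_, h⟩
          exact key s t
      | zero => simp
      | add y z _ _ hy hz => simp [map_add, hy, hz]
      | smul c y _ hy => simp [hy]
  | zero => simp
  | add x y _ _ hx hy => simp [map_add, hx, hy]
  | smul c x _ hx => simp [hx]

/-- **Lemma 3.1(i).** `C_V(d₁) = [V,d₁]` equals the span of `{e⊗x⊗y : x,y ∈ {e,f}}`, has
dimension 4 and is totally isotropic. -/
theorem stmt_5 :
    CV d₁ = comm1 d₁ ∧
    CV d₁ = Submodule.span F3
      {e ⊗ₜ[F3] (e ⊗ₜ[F3] e), e ⊗ₜ[F3] (e ⊗ₜ[F3] f),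
       e ⊗ₜ[F3] (f ⊗ₜ[F3] e), e ⊗ₜ[F3] (f ⊗ₜ[F3] f)} ∧
    Module.finrank F3 (CV d₁) = 4 ∧
    TotallyIsotropic (CV d₁) := by
  refine ⟨by rw [CV_eq_S, comm1_eq_S], CV_eq_S, ?_, ?_⟩
  · rw [CV_eq_S]; exact finrank_S
  · rw [CV_eq_S]; exact isotropic_S
end
end

section
/- With the tensor-product setup over GF(3): C_V(d₃) = span{e⊗e⊗e, f⊗e⊗e − e⊗f⊗e, f⊗e⊗e − e⊗e⊗f} has dimension 3, [V,d₃] has dimension 5, and [V,d₃,d₃] = span{e⊗e⊗e, e⊗e⊗f + e⊗f⊗e + f⊗e⊗e} has dimension 2; moreover C_V(d₃) is properly contained in [V,d₃] and C_V(d₃) is totally isotropic with respect to B. -/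
noncomputable section

open TensorProduct

set_option maxHeartbeats 2000000
set_option maxRecDepth 10000
set_option synthInstance.maxHeartbeats 400000

namespace Aux

lemma de : d e = e := by simp [d, Matrix.toLin'_apply]; decide
lemma df : d f = e + f := by simp [d, Matrix.toLin'_apply]; decide
lemma ωee : ω e e = 0 := by simp [ω]; decide
lemma ωef : ω e f = 1 := by simp [ω]; decide
lemma ωfe : ω f e = -1 := by simp [ω]; decide
lemma ωff : ω f f = 0 := by simp [ω]; decide

/-- abbreviation for pure tensors -/
abbrev T (x y z : W) : V := x ⊗ₜ[F3] (y ⊗ₜ[F3] z)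

abbrev N : V →ₗ[F3] V := d₃ - (LinearMap.id : V →ₗ[F3] V)

lemma N_apply (x y z : W) : N (T x y z) = (d x) ⊗ₜ[F3] ((d y) ⊗ₜ[F3] (d z)) - T x y z := by
  simp [d₃]

lemma N_eee : N (T e e e) = 0 := by rw [N_apply, de]; simp
lemma N_eef : N (T e e f) = T e e e := by
  rw [N_apply, de, df]; simp [tmul_add, add_tmul]; try abel
lemma N_efe : N (T e f e) = T e e e := by
  rw [N_apply, de, df]; simp [tmul_add, add_tmul]; try abel
lemma N_fee : N (T f e e) = T e e e := by
  rw [N_apply, de, df]; simp [tmul_add, add_tmul]; try abel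
lemma N_eff : N (T e f f) = T e e e + T e e f + T e f e := by
  rw [N_apply, de, df]; simp [tmul_add, add_tmul]; try abel
lemma N_fef : N (T f e f) = T e e e + T e e f + T f e e := by
  rw [N_apply, de, df]; simp [tmul_add, add_tmul]; try abel
lemma N_ffe : N (T f f e) = T e e e + T e f e + T f e e := by
  rw [N_apply, de, df]; simp [tmul_add, add_tmul]; try abel
lemma N_fff : N (T f f f) =
    T e e e + T e e f + T e f e + T e f f + T f e e + T f e f + T f f e := by
  rw [N_apply, df]; simp [tmul_add, add_tmul]; try abel

/-- the set of the 8 standard basis tensors -/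
abbrev S8 : Set V :=
  {T e e e, T e e f, T e f e, T e f f, T f e e, T f e f, T f f e, T f f f}

def bW : Module.Basis (Fin 2) F3 W := Pi.basisFun F3 (Fin 2)
def bV : Module.Basis (Fin 2 × Fin 2 × Fin 2) F3 V := bW.tensorProduct (bW.tensorProduct bW)

lemma bV_repr_tmul (x y z : W) (p : Fin 2 × Fin 2 × Fin 2) :
    bV.repr (x ⊗ₜ (y ⊗ₜ z)) p = x p.1 * (y p.2.1 * z p.2.2) := by
  obtain ⟨i, j, k⟩ := p
  simp [bV, Module.Basis.tensorProduct_repr_tmul_apply, bW]; ring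

lemma bW0 : bW 0 = e := by funext j; fin_cases j <;> simp [bW, e]
lemma bW1 : bW 1 = f := by funext j; fin_cases j <;> simp [bW, f]

lemma top_le_span_S8 : (⊤ : Submodule F3 V) ≤ Submodule.span F3 S8 := by
  rw [← bV.span_eq]
  refine Submodule.span_le.mpr ?_
  rintro v ⟨⟨i, j, k⟩, rfl⟩
  have : bV (i, j, k) = (bW i) ⊗ₜ[F3] ((bW j) ⊗ₜ[F3] (bW k)) := by
    simp [bV, Module.Basis.tensorProduct_apply]
  rw [this]
  have hb : ∀ i : Fin 2, bW i = e ∨ bW i = f := by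
    intro i
    fin_cases i
    · exact Or.inl bW0
    · exact Or.inr bW1
  rcases hb i with h | h <;> rcases hb j with h' | h' <;> rcases hb k with h'' | h'' <;>
    rw [h, h', h''] <;> exact Submodule.subset_span (by simp)

abbrev C := Fin 2 × Fin 2 × Fin 2 → F3

def E : V →ₗ[F3] C where
  toFun x := fun p => bV.repr x p
  map_add' x y := by funext p; simp
  map_smul' c x := by funext p; simp

lemma E_tmul (x y z : W) : E (x ⊗ₜ (y ⊗ₜ z)) = fun p => x p.1 * (y p.2.1 * z p.2.2) := by
  funext p; exact bV_repr_tmul x y z p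

lemma li_of_repr {n : ℕ} (v : Fin n → V) (g : Fin n → C)
    (h : ∀ i, E (v i) = g i) (hg : ∀ c : Fin n → F3, ∑ i, c i • g i = 0 → ∀ i, c i = 0) :
    LinearIndependent F3 v := by
  refine (Fintype.linearIndependent_iff (ι := Fin n) (M := V)).mpr ?_
  intro c hc
  apply hg c
  have h2 := congrArg E hc
  simp only [map_sum, map_smul, h, map_zero] at h2
  exact h2

-- generator sets
abbrev S3 : Set V := {T e e e, T f e e - T e f e, T f e e - T e e f}
abbrev T5 : Set V := {T e e e, T e e f, T e f e, T f e e, T e f f + T f e f + T f f e}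
abbrev S2 : Set V := {T e e e, T e e f + T e f e + T f e e}

lemma li_S3 : LinearIndependent F3 ![T e e e, T f e e - T e f e, T f e e - T e e f] := by
  apply li_of_repr _
    ![(fun p => e p.1 * (e p.2.1 * e p.2.2)),
      (fun p => f p.1 * (e p.2.1 * e p.2.2)) - (fun p => e p.1 * (f p.2.1 * e p.2.2)),
      (fun p => f p.1 * (e p.2.1 * e p.2.2)) - (fun p => e p.1 * (e p.2.1 * f p.2.2))]
  · intro i
    fin_cases i <;> simp [map_sub, E_tmul]
  · decide

lemma li_T5 : LinearIndependent F3
    ![T e e e, T e e f, T e f e, T f e e, T e f f + T f e f + T f f e] := by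
  apply li_of_repr _
    ![(fun p => e p.1 * (e p.2.1 * e p.2.2)),
      (fun p => e p.1 * (e p.2.1 * f p.2.2)),
      (fun p => e p.1 * (f p.2.1 * e p.2.2)),
      (fun p => f p.1 * (e p.2.1 * e p.2.2)),
      (fun p => e p.1 * (f p.2.1 * f p.2.2)) + (fun p => f p.1 * (e p.2.1 * f p.2.2))
        + (fun p => f p.1 * (f p.2.1 * e p.2.2))]
  · intro i
    fin_cases i <;> simp [map_add, E_tmul]
  · decide

lemma li_S2 : LinearIndependent F3 ![T e e e, T e e f + T e f e + T f e e] := by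
  apply li_of_repr _
    ![(fun p => e p.1 * (e p.2.1 * e p.2.2)),
      (fun p => e p.1 * (e p.2.1 * f p.2.2)) + (fun p => e p.1 * (f p.2.1 * e p.2.2))
        + (fun p => f p.1 * (e p.2.1 * e p.2.2))]
  · intro i
    fin_cases i <;> simp [map_add, E_tmul]
  · decide

lemma range3 : Set.range ![T e e e, T f e e - T e f e, T f e e - T e e f] = S3 := by
  ext v; simp [Matrix.range_cons, Matrix.range_empty]; tauto

lemma range5 : Set.range ![T e e e, T e e f, T e f e, T f e e, T e f f + T f e f + T f f e]
    = T5 := by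
  ext v; simp [Matrix.range_cons, Matrix.range_empty]; tauto

lemma range2 : Set.range ![T e e e, T e e f + T e f e + T f e e] = S2 := by
  ext v; simp [Matrix.range_cons, Matrix.range_empty]; tauto

lemma finrank_span_S3 : Module.finrank F3 (Submodule.span F3 S3) = 3 := by
  rw [← range3, finrank_span_eq_card li_S3]; rfl

lemma finrank_span_T5 : Module.finrank F3 (Submodule.span F3 T5) = 5 := by
  rw [← range5, finrank_span_eq_card li_T5]; rfl

lemma finrank_span_S2 : Module.finrank F3 (Submodule.span F3 S2) = 2 := by
  rw [← range2, finrank_span_eq_card li_S2]; rfl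

lemma finrank_V : Module.finrank F3 V = 8 := by
  rw [Module.finrank_tensorProduct, Module.finrank_tensorProduct]
  simp

-- span S3 is contained in ker N
lemma span_S3_le_ker : Submodule.span F3 S3 ≤ LinearMap.ker N := by
  refine Submodule.span_le.mpr ?_
  rintro v hv
  simp only [S3, Set.mem_insert_iff, Set.mem_singleton_iff] at hv
  rcases hv with rfl | rfl | rfl <;> simp only [SetLike.mem_coe, LinearMap.mem_ker]
  · exact N_eee
  · rw [map_sub, N_fee, N_efe]; abel
  · rw [map_sub, N_fee, N_eef]; abel

lemma top_eq_span_S8 : (⊤ : Submodule F3 V) = Submodule.span F3 S8 :=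
  le_antisymm top_le_span_S8 le_top

-- range N is contained in span T5
lemma range_le_span_T5 : LinearMap.range N ≤ Submodule.span F3 T5 := by
  rw [LinearMap.range_eq_map, top_eq_span_S8, Submodule.map_span]
  refine Submodule.span_le.mpr ?_
  rintro y ⟨x, hx, rfl⟩
  simp only [S8, Set.mem_insert_iff, Set.mem_singleton_iff] at hx
  have m1 : T e e e ∈ Submodule.span F3 T5 := Submodule.subset_span (by simp)
  have m2 : T e e f ∈ Submodule.span F3 T5 := Submodule.subset_span (by simp)
  have m3 : T e f e ∈ Submodule.span F3 T5 := Submodule.subset_span (by simp)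
  have m4 : T f e e ∈ Submodule.span F3 T5 := Submodule.subset_span (by simp)
  have m5 : T e f f + T f e f + T f f e ∈ Submodule.span F3 T5 :=
    Submodule.subset_span (by simp)
  rcases hx with rfl | rfl | rfl | rfl | rfl | rfl | rfl | rfl
  · rw [N_eee]; exact Submodule.zero_mem _
  · rw [N_eef]; exact m1
  · rw [N_efe]; exact m1
  · rw [N_eff]; exact add_mem (add_mem m1 m2) m3
  · rw [N_fee]; exact m1
  · rw [N_fef]; exact add_mem (add_mem m1 m2) m4
  · rw [N_ffe]; exact add_mem (add_mem m1 m3) m4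
  · rw [N_fff]
    have h : T e e e + T e e f + T e f e + T e f f + T f e e + T f e f + T f f e
        = T e e e + T e e f + T e f e + T f e e + (T e f f + T f e f + T f f e) := by abel
    rw [h]
    exact add_mem (add_mem (add_mem (add_mem m1 m2) m3) m4) m5

-- span T5 is contained in range N
lemma span_T5_le_range : Submodule.span F3 T5 ≤ LinearMap.range N := by
  have heee : T e e e ∈ LinearMap.range N := ⟨T e e f, N_eef⟩
  have heef : T e e f ∈ LinearMap.range N := by
    refine ⟨T e e f + (2:F3) • T e f f + (2:F3) • T f e f + T f f e, ?_⟩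
    simp only [map_add, map_smul, N_eef, N_eff, N_fef, N_ffe]
    match_scalars <;> decide
  have hefe : T e f e ∈ LinearMap.range N := by
    refine ⟨T e e f + (2:F3) • T e f f + T f e f + (2:F3) • T f f e, ?_⟩
    simp only [map_add, map_smul, N_eef, N_eff, N_fef, N_ffe]
    match_scalars <;> decide
  have hfee : T f e e ∈ LinearMap.range N := by
    refine ⟨T e e f + T e f f + (2:F3) • T f e f + (2:F3) • T f f e, ?_⟩
    simp only [map_add, map_smul, N_eef, N_eff, N_fef, N_ffe]
    match_scalars <;> decide
  have h7 : T e e e + T e e f + T e f e + T e f f + T f e e + T f e f + T f f e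
      ∈ LinearMap.range N := ⟨T f f f, N_fff⟩
  refine Submodule.span_le.mpr ?_
  rintro v hv
  simp only [T5, Set.mem_insert_iff, Set.mem_singleton_iff] at hv
  rcases hv with rfl | rfl | rfl | rfl | rfl
  · exact heee
  · exact heef
  · exact hefe
  · exact hfee
  · have h : T e f f + T f e f + T f f e
        = (T e e e + T e e f + T e f e + T e f f + T f e e + T f e f + T f f e)
          - T e e e - T e e f - T e f e - T f e e := by abel
    rw [h]
    exact sub_mem (sub_mem (sub_mem (sub_mem h7 heee) heef) hefe) hfee

lemma comm1_eq : comm1 d₃ = Submodule.span F3 T5 :=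
  le_antisymm range_le_span_T5 span_T5_le_range

lemma finrank_comm1 : Module.finrank F3 (comm1 d₃) = 5 := by
  rw [comm1_eq]; exact finrank_span_T5

lemma finrank_CV : Module.finrank F3 (CV d₃) = 3 := by
  have hrn := LinearMap.finrank_range_add_finrank_ker N
  rw [finrank_V] at hrn
  have G : ∀ x y : ℕ, x + y = 8 → x = 5 → y = 3 := fun x y a b => by omega
  exact G _ _ hrn finrank_comm1

lemma CV_eq : CV d₃ = Submodule.span F3 S3 := by
  refine (Submodule.eq_of_le_of_finrank_eq span_S3_le_ker ?_).symm
  rw [finrank_span_S3]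
  exact finrank_CV.symm

abbrev N2 : V →ₗ[F3] V := N ∘ₗ N

lemma comm2_eq : comm2 d₃ = Submodule.span F3 S2 := by
  have m1 : T e e e ∈ Submodule.span F3 S2 := Submodule.subset_span (by simp)
  have m2 : T e e f + T e f e + T f e e ∈ Submodule.span F3 S2 :=
    Submodule.subset_span (by simp)
  refine le_antisymm ?_ ?_
  · show LinearMap.range N2 ≤ _
    rw [LinearMap.range_eq_map, top_eq_span_S8, Submodule.map_span]
    refine Submodule.span_le.mpr ?_
    rintro y ⟨x, hx, rfl⟩
    simp only [S8, Set.mem_insert_iff, Set.mem_singleton_iff] at hx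
    rcases hx with rfl | rfl | rfl | rfl | rfl | rfl | rfl | rfl
    · rw [LinearMap.comp_apply, N_eee, map_zero]; exact Submodule.zero_mem _
    · rw [LinearMap.comp_apply, N_eef, N_eee]; exact Submodule.zero_mem _
    · rw [LinearMap.comp_apply, N_efe, N_eee]; exact Submodule.zero_mem _
    · rw [LinearMap.comp_apply, N_eff]
      simp only [map_add, N_eee, N_eef, N_efe]
      exact add_mem (add_mem (Submodule.zero_mem _) m1) m1
    · rw [LinearMap.comp_apply, N_fee, N_eee]; exact Submodule.zero_mem _
    · rw [LinearMap.comp_apply, N_fef]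
      simp only [map_add, N_eee, N_eef, N_fee]
      exact add_mem (add_mem (Submodule.zero_mem _) m1) m1
    · rw [LinearMap.comp_apply, N_ffe]
      simp only [map_add, N_eee, N_efe, N_fee]
      exact add_mem (add_mem (Submodule.zero_mem _) m1) m1
    · rw [LinearMap.comp_apply, N_fff]
      simp only [map_add, N_eee, N_eef, N_efe, N_eff, N_fee, N_fef, N_ffe]
      have h : (0:V) + T e e e + T e e e + (T e e e + T e e f + T e f e) + T e e e
          + (T e e e + T e e f + T f e e) + (T e e e + T e f e + T f e e)
          = (2:F3) • (T e e f + T e f e + T f e e) + (2:F3) • ((3:F3) • T e e e) := by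
        match_scalars <;> decide
      rw [h]
      exact add_mem (Submodule.smul_mem _ _ m2)
        (Submodule.smul_mem _ _ (Submodule.smul_mem _ _ m1))
  · refine Submodule.span_le.mpr ?_
    rintro v hv
    simp only [S2, Set.mem_insert_iff, Set.mem_singleton_iff] at hv
    rcases hv with rfl | rfl
    · refine ⟨(2:F3) • T e f f, ?_⟩
      show N2 _ = _
      rw [map_smul, LinearMap.comp_apply, N_eff]
      simp only [map_add, N_eee, N_eef, N_efe]
      match_scalars <;> decide
    · refine ⟨(2:F3) • T f f f, ?_⟩
      show N2 _ = _
      rw [map_smul, LinearMap.comp_apply, N_fff]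
      simp only [map_add, N_eee, N_eef, N_efe, N_eff, N_fee, N_fef, N_ffe]
      match_scalars <;> decide

lemma finrank_comm2 : Module.finrank F3 (comm2 d₃) = 2 := by
  rw [comm2_eq]; exact finrank_span_S2

lemma CV_lt_comm1 : CV d₃ < comm1 d₃ := by
  rw [CV_eq, comm1_eq]
  refine lt_of_le_of_ne ?_ ?_
  · refine Submodule.span_le.mpr ?_
    rintro v hv
    simp only [S3, Set.mem_insert_iff, Set.mem_singleton_iff] at hv
    have m1 : T e e e ∈ Submodule.span F3 T5 := Submodule.subset_span (by simp)
    have m2 : T e e f ∈ Submodule.span F3 T5 := Submodule.subset_span (by simp)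
    have m3 : T e f e ∈ Submodule.span F3 T5 := Submodule.subset_span (by simp)
    have m4 : T f e e ∈ Submodule.span F3 T5 := Submodule.subset_span (by simp)
    rcases hv with rfl | rfl | rfl
    · exact m1
    · exact sub_mem m4 m3
    · exact sub_mem m4 m2
  · intro h
    have h3 := finrank_span_S3
    rw [h, finrank_span_T5] at h3
    exact absurd h3 (by norm_num)

lemma B_tmul (x y z x' y' z' : W) :
    B (x ⊗ₜ[F3] (y ⊗ₜ[F3] z)) (x' ⊗ₜ[F3] (y' ⊗ₜ[F3] z')) = ω y y' * ω z z' * ω x x' := by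
  simp only [B, LinearMap.BilinForm.tensorDistrib_tmul, smul_eq_mul]
  ring

lemma isotropic : TotallyIsotropic (CV d₃) := by
  rw [CV_eq]
  have key : ∀ a ∈ S3, ∀ b ∈ S3, B a b = 0 := by
    intro a ha b hb
    simp only [S3, Set.mem_insert_iff, Set.mem_singleton_iff] at ha hb
    rcases ha with rfl | rfl | rfl <;> rcases hb with rfl | rfl | rfl <;>
      simp [map_sub, LinearMap.sub_apply, B_tmul, ωee, ωef, ωfe, ωff]
  intro u hu v hv
  have h1 : ∀ b ∈ S3, B u b = 0 := by
    intro b hb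
    have hle : Submodule.span F3 S3 ≤ LinearMap.ker (B.flip b) := by
      refine Submodule.span_le.mpr ?_
      intro a ha
      simp only [SetLike.mem_coe, LinearMap.mem_ker, LinearMap.flip_apply]
      exact key a ha b hb
    simpa using hle hu
  have hle2 : Submodule.span F3 S3 ≤ LinearMap.ker (B u) := by
    refine Submodule.span_le.mpr ?_
    intro b hb
    simp only [SetLike.mem_coe, LinearMap.mem_ker]
    exact h1 b hb
  simpa using hle2 hv

end Aux

open Aux in
/-- **Lemma 3.1(iii).** `C_V(d₃) = span{e⊗e⊗e, f⊗e⊗e − e⊗f⊗e, f⊗e⊗e − e⊗e⊗f}` has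
dimension 3, `[V,d₃]` has dimension 5, and `[V,d₃,d₃] = span{e⊗e⊗e, e⊗e⊗f + e⊗f⊗e + f⊗e⊗e}`
has dimension 2; moreover `C_V(d₃)` is properly contained in `[V,d₃]` and is totally
isotropic. -/
theorem stmt_7 :
    CV d₃ = Submodule.span F3
      {e ⊗ₜ[F3] (e ⊗ₜ[F3] e),
       f ⊗ₜ[F3] (e ⊗ₜ[F3] e) - e ⊗ₜ[F3] (f ⊗ₜ[F3] e),
       f ⊗ₜ[F3] (e ⊗ₜ[F3] e) - e ⊗ₜ[F3] (e ⊗ₜ[F3] f)} ∧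
    Module.finrank F3 (CV d₃) = 3 ∧
    Module.finrank F3 (comm1 d₃) = 5 ∧
    comm2 d₃ = Submodule.span F3
      {e ⊗ₜ[F3] (e ⊗ₜ[F3] e),
       e ⊗ₜ[F3] (e ⊗ₜ[F3] f) + e ⊗ₜ[F3] (f ⊗ₜ[F3] e) + f ⊗ₜ[F3] (e ⊗ₜ[F3] e)} ∧
    Module.finrank F3 (comm2 d₃) = 2 ∧
    CV d₃ < comm1 d₃ ∧
    TotallyIsotropic (CV d₃) :=
  ⟨CV_eq, finrank_CV, finrank_comm1, comm2_eq, finrank_comm2, CV_lt_comm1, isotropic⟩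
end
end

section
/- Let G be a finite group, Z a subgroup of G of order 3, and H = C_G(Z). Suppose Q is a normal 3-subgroup of H with C_H(Q) = Z. Then every Sylow 3-subgroup of H is a Sylow 3-subgroup of G. -/
/-- **Lemma 4.1(i)** (second assertion). Let `G` be a finite group, `Z ≤ G` of order 3 and
`H = C_G(Z)`. If `Q` is a normal 3-subgroup of `H` with `C_H(Q) = Z`, then every Sylow
3-subgroup of `H` is a Sylow 3-subgroup of `G`. -/
theorem stmt_11 {G : Type*} [Group G] [Finite G] (Z : Subgroup G)
    (hZ : Nat.card Z = 3)
    (Q : Subgroup G) (hQle : Q ≤ Subgroup.centralizer (Z : Set G))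
    (hQ3 : IsPGroup 3 Q)
    (hQnorm : ∀ h ∈ Subgroup.centralizer (Z : Set G), ∀ q ∈ Q, h * q * h⁻¹ ∈ Q)
    (hCQ : Subgroup.centralizer (Z : Set G) ⊓ Subgroup.centralizer (Q : Set G) = Z) :
    ∀ S : Sylow 3 (Subgroup.centralizer (Z : Set G)),
      ∃ T : Sylow 3 G,
        (T : Subgroup G) =
          Subgroup.map (Subgroup.centralizer (Z : Set G)).subtype (S : Subgroup _) := by
  haveI : Fact (Nat.Prime 3) := ⟨by norm_num⟩
  set H : Subgroup G := Subgroup.centralizer (Z : Set G) with hHdef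
  intro S
  -- Z is commutative (order 3, hence cyclic)
  have hZcyc : IsCyclic Z := isCyclic_of_prime_card hZ
  have hZcomm : ∀ z ∈ Z, ∀ w ∈ Z, z * w = w * z := by
    letI := IsCyclic.commGroup (α := Z)
    intro z hz w hw
    exact congrArg Subtype.val (mul_comm (⟨z, hz⟩ : Z) (⟨w, hw⟩ : Z))
  have hZle : Z ≤ H := by
    intro z hz
    exact Subgroup.mem_centralizer_iff.mpr fun w hw => hZcomm w hw z hz
  -- elements of H commute with elements of Z
  have hcomm : ∀ h ∈ H, ∀ z ∈ Z, z * h = h * z := fun h hh =>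
    Subgroup.mem_centralizer_iff.mp hh
  -- the subgroups of H corresponding to Z and Q
  set ZH : Subgroup H := Z.subgroupOf H with hZHdef
  set QH : Subgroup H := Q.subgroupOf H with hQHdef
  haveI hZHnorm : ZH.Normal := by
    constructor
    intro n hn g
    rw [Subgroup.mem_subgroupOf] at hn ⊢
    have h1 : (n : G) * g = g * n := hcomm g g.2 n hn
    have : ((g * n * g⁻¹ : H) : G) = (n : G) := by
      push_cast
      rw [← h1]
      group
    rw [this]; exact hn
  haveI hQHnorm : QH.Normal := by
    constructor
    intro n hn g
    rw [Subgroup.mem_subgroupOf] at hn ⊢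
    push_cast
    exact hQnorm g g.2 n hn
  have hZHpg : IsPGroup 3 ZH := by
    apply IsPGroup.of_card (n := 1)
    rw [pow_one, Nat.card_congr (Subgroup.subgroupOfEquivOfLe hZle).toEquiv]
    exact hZ
  have hQHpg : IsPGroup 3 QH := hQ3.comap_subtype
  -- Z and Q sit inside S
  have hZS : ZH ≤ S := by
    have := S.is_maximal' (S.isPGroup'.to_sup_of_normal_right hZHpg) le_sup_left
    exact le_trans le_sup_right this.le
  have hQS : QH ≤ S := by
    have := S.is_maximal' (S.isPGroup'.to_sup_of_normal_right hQHpg) le_sup_left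
    exact le_trans le_sup_right this.le
  set S' : Subgroup G := Subgroup.map H.subtype (S : Subgroup H) with hS'def
  have hS'le : S' ≤ H := by
    rintro _ ⟨s, _, rfl⟩
    exact s.2
  have hZS' : Z ≤ S' := by
    have : Subgroup.map H.subtype ZH ≤ S' := Subgroup.map_mono hZS
    rwa [hZHdef, Subgroup.subgroupOf_map_subtype, inf_eq_left.mpr hZle] at this
  have hQS' : Q ≤ S' := by
    have : Subgroup.map H.subtype QH ≤ S' := Subgroup.map_mono hQS
    rwa [hQHdef, Subgroup.subgroupOf_map_subtype, inf_eq_left.mpr hQle] at this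
  -- the key identity: Z(S') = Z
  have hZeq : S' ⊓ Subgroup.centralizer (S' : Set G) = Z := by
    apply le_antisymm
    · intro x hx
      rw [← hCQ]
      refine ⟨hS'le hx.1, ?_⟩
      exact Subgroup.centralizer_le (SetLike.coe_subset_coe.mpr hQS') hx.2
    · intro z hz
      refine ⟨hZS' hz, Subgroup.mem_centralizer_iff.mpr fun s hs => ?_⟩
      exact (hcomm s (hS'le hs) z hz).symm
  have hS'pg : IsPGroup 3 S' := S.isPGroup'.map H.subtype
  refine ⟨⟨S', hS'pg, ?_⟩, rfl⟩
  intro P hP hle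
  by_contra hne
  haveI : Group.IsNilpotent P := hP.isNilpotent
  have hnc : NormalizerCondition P := normalizerCondition_of_isNilpotent
  set K : Subgroup P := S'.subgroupOf P with hKdef
  have hKtop : K ≠ ⊤ := by
    intro h
    apply hne
    apply le_antisymm _ hle
    intro p hp
    have : (⟨p, hp⟩ : P) ∈ K := h ▸ Subgroup.mem_top _
    exact Subgroup.mem_subgroupOf.mp this
  obtain ⟨x, hxn, hxK⟩ := SetLike.exists_of_lt (hnc K (lt_top_iff_ne_top.mpr hKtop))
  set g : G := (x : G) with hgdef
  -- g normalizes S'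
  have hgnorm : g ∈ Subgroup.normalizer (S' : Set G) := by
    rw [Subgroup.mem_normalizer_iff]
    intro n
    constructor
    · intro hn
      have h1 := (Subgroup.mem_normalizer_iff.mp hxn (⟨n, hle hn⟩ : P)).mp
        (Subgroup.mem_subgroupOf.mpr hn)
      exact Subgroup.mem_subgroupOf.mp h1
    · intro hn
      have hx' : x⁻¹ ∈ Subgroup.normalizer (K : Set P) := (Subgroup.normalizer (K : Set P)).inv_mem hxn
      have h1 := (Subgroup.mem_normalizer_iff.mp hx' (⟨g * n * g⁻¹, hle hn⟩ : P)).mp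
        (Subgroup.mem_subgroupOf.mpr hn)
      rw [Subgroup.mem_subgroupOf] at h1
      have : ((x⁻¹ * ⟨g * n * g⁻¹, hle hn⟩ * (x⁻¹)⁻¹ : P) : G) = n := by
        push_cast
        rw [← hgdef]
        group
      rwa [this] at h1
  -- conjugation by g preserves Z
  have hgZ : ∀ z ∈ Z, g * z * g⁻¹ ∈ Z := by
    intro z hz
    rw [← hZeq] at hz ⊢
    obtain ⟨hza, hzb⟩ := Subgroup.mem_inf.mp hz
    refine Subgroup.mem_inf.mpr ⟨(Subgroup.mem_normalizer_iff.mp hgnorm z).mp hza,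
      Subgroup.mem_centralizer_iff.mpr fun s hs => ?_⟩
    have hs' : g⁻¹ * s * g ∈ S' := by
      have := (Subgroup.mem_normalizer_iff.mp hgnorm (g⁻¹ * s * g)).mpr
      apply this
      have : g * (g⁻¹ * s * g) * g⁻¹ = s := by group
      rwa [this]
    have h1 : (g⁻¹ * s * g) * z = z * (g⁻¹ * s * g) :=
      Subgroup.mem_centralizer_iff.mp hzb _ hs'
    have h2 := congrArg (fun t => g * t * g⁻¹) h1
    simpa [mul_assoc] using h2
  -- g has 3-power order
  obtain ⟨m, hm⟩ := hP x
  have hgm : g ^ (3 : ℕ) ^ m = 1 := by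
    have : ((x ^ (3:ℕ) ^ m : P) : G) = g ^ (3:ℕ) ^ m := by push_cast; rfl
    rw [← this, hm]; rfl
  -- g² centralizes Z
  have hg2 : g * g ∈ H := by
    rw [hHdef, Subgroup.mem_centralizer_iff]
    intro z hz
    by_cases hz1 : z = 1
    · subst hz1; simp
    have hzord : orderOf (⟨z, hz⟩ : Z) = 3 := by
      have hdvd : orderOf (⟨z, hz⟩ : Z) ∣ 3 := hZ ▸ orderOf_dvd_natCard _
      rcases (Nat.Prime.eq_one_or_self_of_dvd (by norm_num) _ hdvd) with h | h
      · exact absurd (orderOf_eq_one_iff.mp h) (by simpa [Subtype.ext_iff] using hz1)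
      · exact h
    have hz3 : z ^ (3 : ℕ) = 1 := by
      have := pow_orderOf_eq_one (⟨z, hz⟩ : Z)
      rw [hzord] at this
      simpa [Subtype.ext_iff] using this
    have hz3z : z ^ (3 : ℤ) = 1 := by
      rw [show (3:ℤ) = ((3:ℕ):ℤ) by norm_num, zpow_natCast, hz3]
    have htop : Subgroup.zpowers (⟨z, hz⟩ : Z) = ⊤ :=
      Subgroup.eq_top_of_card_eq _ (by rw [Nat.card_zpowers, hzord, hZ])
    obtain ⟨k, hk⟩ := Subgroup.mem_zpowers_iff.mp
      (htop ▸ Subgroup.mem_top (⟨g * z * g⁻¹, hgZ z hz⟩ : Z))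
    have hkG : z ^ k = g * z * g⁻¹ := by
      have := congrArg Subtype.val hk
      simpa using this
    have hknd : ¬ (3 : ℤ) ∣ k := by
      intro ⟨c, hc⟩
      apply hz1
      have : z ^ k = 1 := by
        rw [hc, zpow_mul, hz3z, one_zpow]
      rw [hkG] at this
      have := congrArg (fun t => g⁻¹ * t * g) this
      simpa [mul_assoc] using this
    have hdvd : (3 : ℤ) ∣ k * k - 1 := by
      have h0 : k % 3 ≠ 0 := fun h => hknd (Int.dvd_of_emod_eq_zero h)
      have h2 : k % 3 = 1 ∨ k % 3 = 2 := by omega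
      obtain ⟨q, hq⟩ : ∃ q, k = 3 * q + k % 3 := ⟨k / 3, by omega⟩
      rcases h2 with h | h <;> rw [hq, h]
      · exact ⟨3 * q * q + 2 * q, by ring⟩
      · exact ⟨3 * q * q + 4 * q + 1, by ring⟩
    -- compute (g*g) z (g*g)⁻¹ = z
    have hconj2 : (g * g) * z * (g * g)⁻¹ = z := by
      have e1 : (g * g) * z * (g * g)⁻¹ = g * (g * z * g⁻¹) * g⁻¹ := by group
      rw [e1, ← hkG, ← conj_zpow, ← hkG, ← zpow_mul]
      obtain ⟨c, hc⟩ := hdvd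
      have hkk : k * k = 1 + 3 * c := by linarith
      rw [hkk, zpow_add, zpow_one, zpow_mul, hz3z, one_zpow, mul_one]
    calc z * (g * g) = ((g * g) * z * (g * g)⁻¹) * (g * g) := by rw [hconj2]
      _ = (g * g) * z := by group
  -- hence g ∈ H, since g has odd order
  have hgH : g ∈ H := by
    have hodd : Odd ((3:ℕ) ^ m) := Odd.pow ⟨1, by norm_num⟩
    obtain ⟨n, hn⟩ := hodd
    have : (g * g) ^ (n + 1) = g := by
      rw [← sq, ← pow_mul, show 2 * (n + 1) = 3 ^ m + 1 by omega, pow_succ, hgm, one_mul]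
    rw [← this]
    exact pow_mem hg2 (n + 1)
  -- zpowers g is a 3-group
  have hzpg : IsPGroup 3 (Subgroup.zpowers g) := by
    rintro ⟨y, i, rfl⟩
    refine ⟨m, ?_⟩
    ext
    push_cast
    rw [← zpow_natCast, ← zpow_mul, mul_comm, zpow_mul, zpow_natCast, hgm, one_zpow]
  -- S' ⊔ ⟨g⟩ is a 3-subgroup of H containing S', so g ∈ S'
  set R : Subgroup G := S' ⊔ Subgroup.zpowers g with hRdef
  have hRpg : IsPGroup 3 R := hS'pg.to_sup_of_normal_left' hzpg (Subgroup.zpowers_le.mpr hgnorm)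
  have hRH : R ≤ H := sup_le hS'le (Subgroup.zpowers_le.mpr hgH)
  have hSR : (S : Subgroup H) ≤ R.subgroupOf H := by
    intro s hs
    exact Subgroup.mem_subgroupOf.mpr (le_sup_left (α := Subgroup G)
      (Subgroup.mem_map_of_mem H.subtype hs))
  have hReq : R.subgroupOf H = S := S.is_maximal' hRpg.comap_subtype hSR
  have hgR : g ∈ R := le_sup_right (α := Subgroup G) (Subgroup.mem_zpowers g)
  have hgS' : g ∈ S' := by
    have : (⟨g, hgH⟩ : H) ∈ R.subgroupOf H := Subgroup.mem_subgroupOf.mpr hgR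
    rw [hReq] at this
    exact Subgroup.mem_map_of_mem H.subtype this
  exact hxK (Subgroup.mem_subgroupOf.mpr hgS')
end
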